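/- Let λ₁, …, λ_N be positive reals with partial sums Λ_i = λ₁ + ⋯ + λ_i, let m > 0 and μ > 0, and suppose every service-time Laplace–Stieltjes transform is that of the exponential distribution with rate μ, i.e. β_j(s) = μ/(μ + s) for all j and s > 0. Define d_j and g_j recursively by g_i = (1/Λ_i) Σ_{j=1}^{i} λ_j d_j and d_j = (1 − β_j(Λ_j/m))(1/Λ_j + g_j). Then for every i = 1, …, N one has g_i = 1/(m μ) and d_i = 1/(m μ). (This is the computation underlying the paper's exactness claim in the exponential case, Case 2 of Section 3.) -/

import Mathlib

open Finset

/-- Exponential case (Case 2 of Section 3): if every service-time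
Laplace–Stieltjes transform is `β_j(s) = μ/(μ + s)` (exponential with rate `μ`)
and `d_j`, `g_i` satisfy the recursions `d_j = (1 − β_j(Λ_j/m))(1/Λ_j + g_j)`,
`g_i = (1/Λ_i) ∑_{j=1}^i λ_j d_j`, then `g_i = d_i = 1/(mμ)` for all `i = 1, …, N`. -/
theorem exponential_case_busy_period
    (N : ℕ) (lam : ℕ → ℝ) (m mu : ℝ)
    (hm : 0 < m) (hmu : 0 < mu)
    (hlam : ∀ j, 1 ≤ j → j ≤ N → 0 < lam j)
    (Lam : ℕ → ℝ) (hLam : ∀ j, Lam j = ∑ k ∈ Icc 1 j, lam k)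
    (d g : ℕ → ℝ)
    (hd : ∀ j, 1 ≤ j → j ≤ N →
      d j = (1 - mu / (mu + Lam j / m)) * (1 / Lam j + g j))
    (hg : ∀ i, 1 ≤ i → i ≤ N →
      g i = (1 / Lam i) * ∑ j ∈ Icc 1 i, lam j * d j) :
    ∀ i, 1 ≤ i → i ≤ N → g i = 1 / (m * mu) ∧ d i = 1 / (m * mu) := by
  intro i
  induction i using Nat.strong_induction_on with
  | _ i IH =>
    intro h1 h2
    obtain ⟨k, rfl⟩ : ∃ k, i = k + 1 := ⟨i - 1, by omega⟩
    have hLk : 0 ≤ Lam k := by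
      rw [hLam]
      apply Finset.sum_nonneg
      intro j hj
      rw [Finset.mem_Icc] at hj
      exact (hlam j hj.1 (by omega)).le
    have hlampos : 0 < lam (k + 1) := hlam (k + 1) (by omega) h2
    have hLk1 : Lam (k + 1) = Lam k + lam (k + 1) := by
      rw [hLam, hLam, Finset.sum_Icc_succ_top (by omega : 1 ≤ k + 1)]
    have hL : 0 < Lam (k + 1) := by rw [hLk1]; positivity
    have hsum : ∑ j ∈ Icc 1 (k + 1), lam j * d j
        = Lam k / (m * mu) + lam (k + 1) * d (k + 1) := by
      rw [Finset.sum_Icc_succ_top (by omega : 1 ≤ k + 1)]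
      congr 1
      rw [hLam, Finset.sum_div]
      apply Finset.sum_congr rfl
      intro j hj
      rw [Finset.mem_Icc] at hj
      rw [(IH j (by omega) hj.1 (by omega)).2]
      ring
    have hE1 := hd (k + 1) (by omega) h2
    have hE2 := hg (k + 1) (by omega) h2
    rw [hsum] at hE2
    have hm' : m ≠ 0 := hm.ne'
    have hmu' : mu ≠ 0 := hmu.ne'
    have hL' : Lam (k + 1) ≠ 0 := hL.ne'
    have hden : mu + Lam (k + 1) / m ≠ 0 := by positivity
    -- from E1: (m*mu + Lam) * d = 1 + Lam * g
    have hA : (m * mu + Lam (k + 1)) * d (k + 1) = 1 + Lam (k + 1) * g (k + 1) := by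
      field_simp at hE1
      have h' : ((m * mu + Lam (k + 1)) * d (k + 1)) * Lam (k + 1)
          = (1 + Lam (k + 1) * g (k + 1)) * Lam (k + 1) := by linear_combination hE1
      exact mul_right_cancel₀ hL' h'
    -- from E2: Lam * g = Lam k / (m*mu) * Lam? no: g = (1/L)(Lk/(mμ) + λ d)
    have hB : Lam (k + 1) * g (k + 1) = Lam k / (m * mu) + lam (k + 1) * d (k + 1) := by
      rw [hE2]; field_simp
    have hC : (m * mu + Lam k) * d (k + 1) = (m * mu + Lam k) / (m * mu) := by
      have := hA
      rw [hB, hLk1] at this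
      field_simp at this ⊢
      have hpos' : 0 < m * mu + Lam k := by linarith [mul_pos hm hmu, hLk]
      have h0 : (m * mu + Lam k) * (m * mu * d (k + 1) - 1) = 0 := by linear_combination this
      rcases mul_eq_zero.1 h0 with h0 | h0
      · linarith
      · linarith
    have hCpos : (0:ℝ) < m * mu + Lam k := by positivity
    have hd1 : d (k + 1) = 1 / (m * mu) := by
      apply mul_left_cancel₀ hCpos.ne'
      rw [hC]; field_simp
    have hg1 : g (k + 1) = 1 / (m * mu) := by
      have := hB
      rw [hd1, hLk1] at this
      field_simp at this ⊢
      nlinarith [this]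
    exact ⟨hg1, hd1⟩
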